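/- Let N ≥ 1 and fix R₀ > 0. Let (ε_n) be a sequence of positive reals with ε_n → 0, and let (u_n) ⊂ L²(ℝ^N) converge in L²(ℝ^N) to some u ≠ 0. Then Q_{ε_n}(u_n) → 0 in ℝ^N. -/

import Mathlib

open MeasureTheory Filter

/-- The truncation map `χ(x) = x` if `|x| ≤ R₀`, `χ(x) = R₀·x/|x|` if `|x| > R₀`. -/
noncomputable def chi {N : ℕ} (R₀ : ℝ) (x : EuclideanSpace ℝ (Fin N)) :
    EuclideanSpace ℝ (Fin N) :=
  if ‖x‖ ≤ R₀ then x else (R₀ / ‖x‖) • x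

/-- The barycenter-type map
`Q_ε(u) = (∫ χ(εx)·g(εx)·u(x)² dx) / (∫ g(εx)·u(x)² dx)`. -/
noncomputable def Qeps {N : ℕ} (R₀ : ℝ) (g : EuclideanSpace ℝ (Fin N) → ℝ) (ε : ℝ)
    (u : EuclideanSpace ℝ (Fin N) → ℝ) : EuclideanSpace ℝ (Fin N) :=
  (∫ x, g (ε • x) * (u x) ^ 2)⁻¹ • ∫ x, (g (ε • x) * (u x) ^ 2) • chi R₀ (ε • x)

open Metric Set

lemma chi_norm_le {N : ℕ} (R₀ : ℝ) (hR₀ : 0 < R₀) (y : EuclideanSpace ℝ (Fin N)) :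
    ‖chi R₀ y‖ ≤ min ‖y‖ R₀ := by
  unfold chi
  by_cases h : ‖y‖ ≤ R₀
  · rw [if_pos h]
    exact le_min le_rfl h
  · push_neg at h
    have hy : (0:ℝ) < ‖y‖ := lt_trans hR₀ h
    rw [if_neg (not_le.mpr h), norm_smul, Real.norm_eq_abs,
      abs_of_pos (div_pos hR₀ hy), div_mul_cancel₀ _ hy.ne']
    exact le_min h.le le_rfl

lemma chi_measurable {N : ℕ} (R₀ : ℝ) : Measurable (chi (N := N) R₀) := by
  unfold chi
  exact Measurable.ite (measurableSet_le measurable_norm measurable_const) measurable_id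
    ((measurable_const.div measurable_norm).smul measurable_id)

set_option maxHeartbeats 1000000 in
theorem Qeps_tendsto_zero (N : ℕ) (hN : 1 ≤ N) (R₀ : ℝ) (hR₀ : 0 < R₀)
    (g : EuclideanSpace ℝ (Fin N) → ℝ) (hg : Continuous g) (hgpos : ∀ x, 0 < g x)
    (hg0 : Tendsto g (cocompact _) (nhds 0))
    (ε : ℕ → ℝ) (hεpos : ∀ n, 0 < ε n) (hε0 : Tendsto ε atTop (nhds 0))
    (u : ℕ → EuclideanSpace ℝ (Fin N) → ℝ) (hun : ∀ n, MemLp (u n) 2 volume)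
    (v : EuclideanSpace ℝ (Fin N) → ℝ) (hv : MemLp v 2 volume)
    (hvne : ¬ v =ᵐ[volume] 0)
    (hconv : Tendsto (fun n => ∫ x, (u n x - v x) ^ 2) atTop (nhds 0)) :
    Tendsto (fun n => Qeps R₀ g (ε n) (u n)) atTop
      (nhds (0 : EuclideanSpace ℝ (Fin N))) := by
  classical
  -- squared-integrability facts
  have hvsq : Integrable (fun x => v x ^ 2) volume := hv.integrable_sq
  have hunsq : ∀ n, Integrable (fun x => u n x ^ 2) volume := fun n => (hun n).integrable_sq
  have hdsq : ∀ n, Integrable (fun x => (u n x - v x) ^ 2) volume :=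
    fun n => ((hun n).sub hv).integrable_sq
  set J : ℝ := ∫ x, v x ^ 2 with hJdef
  set t : ℕ → ℝ := fun n => ∫ x, (u n x - v x) ^ 2 with htdef
  have htnn : ∀ n, 0 ≤ t n := fun n => integral_nonneg fun x => sq_nonneg _
  clear_value J t
  have hJpos : 0 < J := by
    rw [hJdef, integral_pos_iff_support_of_nonneg (fun x => sq_nonneg _) hvsq]
    have hsupp : Function.support (fun x => v x ^ 2) = Function.support v := by
      ext x; simp [Function.mem_support, pow_eq_zero_iff]
    rw [hsupp, pos_iff_ne_zero]
    intro h0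
    apply hvne
    have := (measure_eq_zero_iff_ae_notMem).mp h0
    filter_upwards [this] with x hx
    simpa [Function.mem_support] using hx
  -- bound M on g
  obtain ⟨K, hKc, hKsub⟩ : ∃ K, IsCompact K ∧ Kᶜ ⊆ {x | dist (g x) 0 < 1} :=
    mem_cocompact.mp (Metric.tendsto_nhds.mp hg0 1 one_pos)
  obtain ⟨C₀, hC₀⟩ := hKc.exists_bound_of_continuousOn hg.continuousOn
  set M : ℝ := max C₀ 1 with hMdef
  have hM1 : (1:ℝ) ≤ M := le_max_right _ _
  have hM0 : (0:ℝ) < M := lt_of_lt_of_le one_pos hM1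
  have hMle : ∀ x, g x ≤ M := by
    intro x
    by_cases hx : x ∈ K
    · exact le_trans (le_trans (le_abs_self _) (hC₀ x hx)) (le_max_left _ _)
    · have hlt := hKsub hx
      simp only [mem_setOf_eq, Real.dist_eq, sub_zero] at hlt
      exact le_trans (le_abs_self _) (le_trans hlt.le hM1)
  clear_value M
  -- lower bound for g near 0
  obtain ⟨r, hr0, hrg⟩ : ∃ r > 0, ∀ y : EuclideanSpace ℝ (Fin N), ‖y‖ < r → g 0 / 2 < g y := by
    have h1 : ∀ᶠ y in nhds (0 : EuclideanSpace ℝ (Fin N)), g 0 / 2 < g y :=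
      hg.continuousAt.eventually (lt_mem_nhds (half_lt_self (hgpos 0)))
    obtain ⟨r, hr0, hr⟩ := Metric.eventually_nhds_iff.mp h1
    exact ⟨r, hr0, fun y hy => hr (by simpa [dist_zero_right] using hy)⟩
  set c : ℝ := g 0 / 2 with hcdef
  have hc0 : 0 < c := half_pos (hgpos 0)
  clear_value c
  -- integrability of the densities
  have hgc : ∀ e : ℝ, Continuous fun x : EuclideanSpace ℝ (Fin N) => g (e • x) :=
    fun e => hg.comp (continuous_const_smul e)
  have hfint : ∀ n, Integrable (fun x => g (ε n • x) * u n x ^ 2) volume := fun n =>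
    (hunsq n).bdd_mul (c := M) ((hgc (ε n)).aestronglyMeasurable)
      (ae_of_all _ fun x => by rw [Real.norm_eq_abs, abs_of_pos (hgpos _)]; exact hMle _)
  have hfnn : ∀ n x, 0 ≤ g (ε n • x) * u n x ^ 2 :=
    fun n x => mul_nonneg (hgpos _).le (sq_nonneg _)
  have hchiaesm : ∀ n, AEStronglyMeasurable (fun x : EuclideanSpace ℝ (Fin N) => chi R₀ (ε n • x)) volume := by
    intro n
    have hm : Measurable fun x : EuclideanSpace ℝ (Fin N) => chi R₀ (ε n • x) :=
      (chi_measurable R₀).comp (measurable_const_smul (ε n))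
    exact hm.aestronglyMeasurable
  have hchibound : ∀ (e : ℝ) (x : EuclideanSpace ℝ (Fin N)), ‖chi R₀ (e • x)‖ ≤ R₀ :=
    fun e x => (chi_norm_le R₀ hR₀ _).trans (min_le_right _ _)
  have hSint : ∀ n,
      Integrable (fun x => (g (ε n • x) * u n x ^ 2) * ‖chi R₀ (ε n • x)‖) volume := by
    intro n
    refine Integrable.mono' ((hfint n).const_mul R₀)
      (((hfint n).aestronglyMeasurable).mul (hchiaesm n).norm) ?_
    filter_upwards with x
    rw [Real.norm_eq_abs, abs_of_nonneg (mul_nonneg (hfnn n x) (norm_nonneg _))]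
    calc (g (ε n • x) * u n x ^ 2) * ‖chi R₀ (ε n • x)‖
        ≤ (g (ε n • x) * u n x ^ 2) * R₀ :=
          mul_le_mul_of_nonneg_left (hchibound _ _) (hfnn n x)
      _ = R₀ * (g (ε n • x) * u n x ^ 2) := mul_comm _ _
  have hvec : ∀ n,
      Integrable (fun x => (g (ε n • x) * u n x ^ 2) • chi R₀ (ε n • x)) volume := by
    intro n
    refine Integrable.mono' ((hfint n).const_mul R₀)
      (((hfint n).aestronglyMeasurable).smul (hchiaesm n)) ?_
    filter_upwards with x
    rw [norm_smul, Real.norm_eq_abs, abs_of_nonneg (hfnn n x)]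
    calc (g (ε n • x) * u n x ^ 2) * ‖chi R₀ (ε n • x)‖
        ≤ (g (ε n • x) * u n x ^ 2) * R₀ :=
          mul_le_mul_of_nonneg_left (hchibound _ _) (hfnn n x)
      _ = R₀ * (g (ε n • x) * u n x ^ 2) := mul_comm _ _
  -- ball exhaustion for ∫ v²
  have hballs : Tendsto
      (fun k : ℕ => ∫ x in closedBall (0 : EuclideanSpace ℝ (Fin N)) (k : ℝ), v x ^ 2)
      atTop (nhds J) := by
    have hU : (⋃ k : ℕ, closedBall (0 : EuclideanSpace ℝ (Fin N)) (k : ℝ)) = univ := by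
      ext x
      simp only [mem_iUnion, mem_closedBall, dist_zero_right, mem_univ, iff_true]
      exact ⟨⌈‖x‖⌉₊, Nat.le_ceil _⟩
    have hmono : Monotone (fun k : ℕ => closedBall (0 : EuclideanSpace ℝ (Fin N)) (k : ℝ)) :=
      fun i j hij => closedBall_subset_closedBall (Nat.cast_le.mpr hij)
    have hion : IntegrableOn (fun x => v x ^ 2)
        (⋃ k : ℕ, closedBall (0 : EuclideanSpace ℝ (Fin N)) (k : ℝ)) volume := by
      rw [hU]; exact integrableOn_univ.mpr hvsq
    have h := tendsto_setIntegral_of_monotone (fun k : ℕ => measurableSet_closedBall) hmono hion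
    rwa [hU, Measure.restrict_univ, ← hJdef] at h
  have htail : ∀ η > 0, ∃ R : ℝ, 0 < R ∧
      (∫ x in (closedBall (0 : EuclideanSpace ℝ (Fin N)) R)ᶜ, v x ^ 2) < η := by
    intro η hη
    obtain ⟨k, hk⟩ := (hballs.eventually (lt_mem_nhds (show J - η < J by linarith))).exists
    refine ⟨max (k : ℝ) 1, lt_of_lt_of_le one_pos (le_max_right _ _), ?_⟩
    have h1 : (∫ x in (closedBall (0 : EuclideanSpace ℝ (Fin N)) (max (k : ℝ) 1))ᶜ, v x ^ 2)
        ≤ ∫ x in (closedBall (0 : EuclideanSpace ℝ (Fin N)) (k : ℝ))ᶜ, v x ^ 2 :=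
      setIntegral_mono_set hvsq.integrableOn (ae_of_all _ fun x => sq_nonneg _)
        ((compl_subset_compl.mpr (closedBall_subset_closedBall (le_max_left _ _))).eventuallyLE)
    have h2 := integral_add_compl (measurableSet_closedBall
      (x := (0 : EuclideanSpace ℝ (Fin N))) (ε := (k : ℝ))) hvsq (f := fun x => v x ^ 2)
    have h2' : (∫ x in (closedBall (0 : EuclideanSpace ℝ (Fin N)) (k : ℝ))ᶜ, v x ^ 2)
        = J - ∫ x in closedBall (0 : EuclideanSpace ℝ (Fin N)) (k : ℝ), v x ^ 2 := by
      rw [hJdef]; linarith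
    linarith
  -- a ball carrying positive mass of v²
  obtain ⟨R₁, hR₁pos, hδ0⟩ : ∃ R₁ : ℝ, 0 < R₁ ∧
      J / 2 < ∫ x in closedBall (0 : EuclideanSpace ℝ (Fin N)) R₁, v x ^ 2 := by
    obtain ⟨k, hk⟩ := (hballs.eventually (lt_mem_nhds (half_lt_self hJpos))).exists
    refine ⟨max (k : ℝ) 1, lt_of_lt_of_le one_pos (le_max_right _ _), lt_of_lt_of_le hk ?_⟩
    exact setIntegral_mono_set hvsq.integrableOn (ae_of_all _ fun x => sq_nonneg _)
      ((closedBall_subset_closedBall (le_max_left _ _)).eventuallyLE)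
  set B₁ := closedBall (0 : EuclideanSpace ℝ (Fin N)) R₁ with hB₁def
  set δ0 : ℝ := ∫ x in B₁, v x ^ 2 with hδ0def
  have hδ0pos : 0 < δ0 := lt_trans (half_pos hJpos) hδ0
  set d : ℝ := c * (δ0 / 4) with hddef
  have hd0 : 0 < d := by rw [hddef]; exact mul_pos hc0 (by linarith)
  clear_value δ0 d
  -- eventual lower bound on the denominator
  have hDlow : ∀ᶠ n in atTop, d ≤ ∫ x, g (ε n • x) * u n x ^ 2 := by
    have hev1 : ∀ᶠ n in atTop, ε n < r / R₁ := hε0.eventually (gt_mem_nhds (div_pos hr0 hR₁pos))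
    have hev2 : ∀ᶠ n in atTop, t n < δ0 / 4 := hconv.eventually (gt_mem_nhds (by linarith))
    filter_upwards [hev1, hev2] with n h1 h2
    have hkey : ∀ x ∈ B₁, c * u n x ^ 2 ≤ g (ε n • x) * u n x ^ 2 := by
      intro x hx
      have hxn : ‖x‖ ≤ R₁ := by
        rw [hB₁def, mem_closedBall, dist_zero_right] at hx; exact hx
      have hsm : ‖ε n • x‖ < r := by
        rw [norm_smul, Real.norm_eq_abs, abs_of_pos (hεpos n)]
        calc ε n * ‖x‖ ≤ ε n * R₁ := mul_le_mul_of_nonneg_left hxn (hεpos n).le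
          _ < (r / R₁) * R₁ := mul_lt_mul_of_pos_right h1 hR₁pos
          _ = r := div_mul_cancel₀ r hR₁pos.ne'
      exact mul_le_mul_of_nonneg_right (hrg _ hsm).le (sq_nonneg _)
    have i1 : (∫ x in B₁, (v x ^ 2 / 2 - (u n x - v x) ^ 2)) ≤ ∫ x in B₁, u n x ^ 2 :=
      setIntegral_mono_on ((hvsq.div_const 2).sub (hdsq n)).integrableOn
        (hunsq n).integrableOn measurableSet_closedBall
        (fun x _ => by nlinarith [sq_nonneg (u n x + (u n x - v x))])
    have i2 : (∫ x in B₁, (v x ^ 2 / 2 - (u n x - v x) ^ 2))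
        = δ0 / 2 - ∫ x in B₁, (u n x - v x) ^ 2 := by
      rw [integral_sub (hvsq.div_const 2).integrableOn (hdsq n).integrableOn, integral_div,
        hδ0def]
    have i3 : (∫ x in B₁, (u n x - v x) ^ 2) ≤ t n := by
      rw [htdef]
      exact setIntegral_le_integral (hdsq n) (ae_of_all _ fun x => sq_nonneg _)
    have i4 : c * ∫ x in B₁, u n x ^ 2 ≤ ∫ x in B₁, g (ε n • x) * u n x ^ 2 := by
      rw [← integral_const_mul]
      exact setIntegral_mono_on ((hunsq n).integrableOn.const_mul c)
        (hfint n).integrableOn measurableSet_closedBall hkey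
    have i5 : (∫ x in B₁, g (ε n • x) * u n x ^ 2) ≤ ∫ x, g (ε n • x) * u n x ^ 2 :=
      setIntegral_le_integral (hfint n) (ae_of_all _ fun x => hfnn n x)
    have i6 : δ0 / 4 ≤ ∫ x in B₁, u n x ^ 2 := by linarith
    have i7 : c * (δ0 / 4) ≤ c * ∫ x in B₁, u n x ^ 2 :=
      mul_le_mul_of_nonneg_left i6 hc0.le
    rw [hddef]; linarith
  -- numerator integral tends to 0
  have hS : Tendsto (fun n => ∫ x, (g (ε n • x) * u n x ^ 2) * ‖chi R₀ (ε n • x)‖)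
      atTop (nhds 0) := by
    refine Metric.tendsto_nhds.mpr fun δ hδ => ?_
    have h8 : (0:ℝ) < 8 * M * R₀ := by positivity
    obtain ⟨R, hRpos, hτ⟩ := htail (δ / (8 * M * R₀)) (div_pos hδ h8)
    set B := closedBall (0 : EuclideanSpace ℝ (Fin N)) R with hBdef
    set τ : ℝ := ∫ x in Bᶜ, v x ^ 2 with hτdef
    have hτnn : 0 ≤ τ := integral_nonneg fun x => sq_nonneg _
    clear_value τ
    set C : ℝ := 2 + 2 * J with hCdef
    have hCpos : 0 < C := by rw [hCdef]; linarith
    clear_value C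
    have h4 : (0:ℝ) < 4 * M * R * C := by positivity
    have hev1 : ∀ᶠ n in atTop, t n < 1 := hconv.eventually (gt_mem_nhds one_pos)
    have hev2 : ∀ᶠ n in atTop, t n < δ / (8 * M * R₀) :=
      hconv.eventually (gt_mem_nhds (div_pos hδ h8))
    have hev3 : ∀ᶠ n in atTop, ε n < δ / (4 * M * R * C) :=
      hε0.eventually (gt_mem_nhds (div_pos hδ h4))
    filter_upwards [hev1, hev2, hev3] with n h1 h2 h3
    have hSnn : 0 ≤ ∫ x, (g (ε n • x) * u n x ^ 2) * ‖chi R₀ (ε n • x)‖ :=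
      integral_nonneg fun x => mul_nonneg (hfnn n x) (norm_nonneg _)
    rw [Real.dist_eq, sub_zero, abs_of_nonneg hSnn]
    -- L² bound on u n
    have hI : (∫ x, u n x ^ 2) ≤ C := by
      have hmono : (∫ x, u n x ^ 2) ≤ ∫ x, (2 * (u n x - v x) ^ 2 + 2 * v x ^ 2) :=
        integral_mono (hunsq n) (((hdsq n).const_mul 2).add (hvsq.const_mul 2))
          (fun x => by nlinarith [sq_nonneg (u n x - 2 * v x)])
      have heq : (∫ x, (2 * (u n x - v x) ^ 2 + 2 * v x ^ 2)) = 2 * t n + 2 * J := by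
        rw [integral_add ((hdsq n).const_mul 2) (hvsq.const_mul 2), integral_const_mul,
          integral_const_mul, htdef, hJdef]
      rw [hCdef]; rw [heq] at hmono; linarith
    -- split at radius R
    have hsplit : (∫ x, (g (ε n • x) * u n x ^ 2) * ‖chi R₀ (ε n • x)‖)
        = (∫ x in B, (g (ε n • x) * u n x ^ 2) * ‖chi R₀ (ε n • x)‖)
          + ∫ x in Bᶜ, (g (ε n • x) * u n x ^ 2) * ‖chi R₀ (ε n • x)‖ :=
      (integral_add_compl measurableSet_closedBall (hSint n)).symm
    have hb1 : (∫ x in B, (g (ε n • x) * u n x ^ 2) * ‖chi R₀ (ε n • x)‖)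
        ≤ M * (ε n * R) * C := by
      have hpt : ∀ x ∈ B, (g (ε n • x) * u n x ^ 2) * ‖chi R₀ (ε n • x)‖
          ≤ (M * (ε n * R)) * u n x ^ 2 := by
        intro x hx
        have hxR : ‖x‖ ≤ R := by rw [hBdef, mem_closedBall, dist_zero_right] at hx; exact hx
        have e1 : ‖chi R₀ (ε n • x)‖ ≤ ε n * R := by
          refine (chi_norm_le R₀ hR₀ _).trans ((min_le_left _ _).trans ?_)
          rw [norm_smul, Real.norm_eq_abs, abs_of_pos (hεpos n)]
          exact mul_le_mul_of_nonneg_left hxR (hεpos n).le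
        calc (g (ε n • x) * u n x ^ 2) * ‖chi R₀ (ε n • x)‖
            ≤ (g (ε n • x) * u n x ^ 2) * (ε n * R) :=
              mul_le_mul_of_nonneg_left e1 (hfnn n x)
          _ ≤ (M * u n x ^ 2) * (ε n * R) :=
              mul_le_mul_of_nonneg_right
                (mul_le_mul_of_nonneg_right (hMle _) (sq_nonneg _))
                (mul_nonneg (hεpos n).le (hRpos.le.trans (le_refl _)))
          _ = (M * (ε n * R)) * u n x ^ 2 := by ring
      calc (∫ x in B, (g (ε n • x) * u n x ^ 2) * ‖chi R₀ (ε n • x)‖)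
          ≤ ∫ x in B, (M * (ε n * R)) * u n x ^ 2 :=
            setIntegral_mono_on (hSint n).integrableOn
              ((hunsq n).integrableOn.const_mul _) measurableSet_closedBall hpt
        _ = (M * (ε n * R)) * ∫ x in B, u n x ^ 2 := integral_const_mul _ _
        _ ≤ (M * (ε n * R)) * ∫ x, u n x ^ 2 := by
            exact mul_le_mul_of_nonneg_left
              (setIntegral_le_integral (hunsq n) (ae_of_all _ fun x => sq_nonneg _))
              (mul_nonneg hM0.le (mul_nonneg (hεpos n).le hRpos.le))
        _ ≤ (M * (ε n * R)) * C := by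
            exact mul_le_mul_of_nonneg_left hI
              (mul_nonneg hM0.le (mul_nonneg (hεpos n).le hRpos.le))
        _ = M * (ε n * R) * C := rfl
    have hb2 : (∫ x in Bᶜ, (g (ε n • x) * u n x ^ 2) * ‖chi R₀ (ε n • x)‖)
        ≤ M * R₀ * (2 * t n + 2 * τ) := by
      have hpt : ∀ x ∈ Bᶜ, (g (ε n • x) * u n x ^ 2) * ‖chi R₀ (ε n • x)‖
          ≤ (M * R₀) * u n x ^ 2 := by
        intro x _
        calc (g (ε n • x) * u n x ^ 2) * ‖chi R₀ (ε n • x)‖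
            ≤ (g (ε n • x) * u n x ^ 2) * R₀ :=
              mul_le_mul_of_nonneg_left (hchibound _ _) (hfnn n x)
          _ ≤ (M * u n x ^ 2) * R₀ :=
              mul_le_mul_of_nonneg_right
                (mul_le_mul_of_nonneg_right (hMle _) (sq_nonneg _)) hR₀.le
          _ = (M * R₀) * u n x ^ 2 := by ring
      have hcompl : MeasurableSet (Bᶜ) := measurableSet_closedBall.compl
      have htail2 : (∫ x in Bᶜ, u n x ^ 2) ≤ 2 * t n + 2 * τ := by
        have hmono : (∫ x in Bᶜ, u n x ^ 2)
            ≤ ∫ x in Bᶜ, (2 * (u n x - v x) ^ 2 + 2 * v x ^ 2) :=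
          setIntegral_mono_on (hunsq n).integrableOn
            (((hdsq n).const_mul 2).add (hvsq.const_mul 2)).integrableOn hcompl
            (fun x _ => by nlinarith [sq_nonneg (u n x - 2 * v x)])
        have heq : (∫ x in Bᶜ, (2 * (u n x - v x) ^ 2 + 2 * v x ^ 2))
            = 2 * (∫ x in Bᶜ, (u n x - v x) ^ 2) + 2 * τ := by
          rw [integral_add ((hdsq n).const_mul 2).integrableOn (hvsq.const_mul 2).integrableOn,
            integral_const_mul, integral_const_mul, hτdef]
        have hle : (∫ x in Bᶜ, (u n x - v x) ^ 2) ≤ t n := by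
          rw [htdef]
          exact setIntegral_le_integral (hdsq n) (ae_of_all _ fun x => sq_nonneg _)
        rw [heq] at hmono; linarith
      calc (∫ x in Bᶜ, (g (ε n • x) * u n x ^ 2) * ‖chi R₀ (ε n • x)‖)
          ≤ ∫ x in Bᶜ, (M * R₀) * u n x ^ 2 :=
            setIntegral_mono_on (hSint n).integrableOn
              ((hunsq n).integrableOn.const_mul _) hcompl hpt
        _ = (M * R₀) * ∫ x in Bᶜ, u n x ^ 2 := integral_const_mul _ _
        _ ≤ M * R₀ * (2 * t n + 2 * τ) :=
            mul_le_mul_of_nonneg_left htail2 (by positivity)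
    -- arithmetic
    have k3 : M * (ε n * R) * C < δ / 4 := by
      rw [lt_div_iff₀ h4] at h3
      nlinarith
    have k2 : M * R₀ * (2 * t n) < δ / 4 := by
      rw [lt_div_iff₀ h8] at h2
      nlinarith
    have k1 : M * R₀ * (2 * τ) < δ / 4 := by
      rw [lt_div_iff₀ h8] at hτ
      nlinarith
    have : M * R₀ * (2 * t n + 2 * τ) = M * R₀ * (2 * t n) + M * R₀ * (2 * τ) := by ring
    rw [hsplit]
    have hsum := add_le_add hb1 hb2
    linarith [hsum, k1, k2, k3, this, hδ]
  -- conclude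
  have hfinal : ∀ᶠ n in atTop, ‖Qeps R₀ g (ε n) (u n)‖
      ≤ d⁻¹ * ∫ x, (g (ε n • x) * u n x ^ 2) * ‖chi R₀ (ε n • x)‖ := by
    filter_upwards [hDlow] with n hD
    have hDpos : 0 < ∫ x, g (ε n • x) * u n x ^ 2 := lt_of_lt_of_le hd0 hD
    have hSnn : 0 ≤ ∫ x, (g (ε n • x) * u n x ^ 2) * ‖chi R₀ (ε n • x)‖ :=
      integral_nonneg fun x => mul_nonneg (hfnn n x) (norm_nonneg _)
    have hnum : ‖∫ x, (g (ε n • x) * u n x ^ 2) • chi R₀ (ε n • x)‖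
        ≤ ∫ x, (g (ε n • x) * u n x ^ 2) * ‖chi R₀ (ε n • x)‖ := by
      refine (norm_integral_le_integral_norm _).trans_eq ?_
      refine integral_congr_ae (ae_of_all _ fun x => ?_)
      simp only [norm_smul, Real.norm_eq_abs, abs_of_nonneg (hfnn n x)]
    rw [Qeps, norm_smul, Real.norm_eq_abs, abs_inv, abs_of_pos hDpos]
    calc (∫ x, g (ε n • x) * u n x ^ 2)⁻¹
          * ‖∫ x, (g (ε n • x) * u n x ^ 2) • chi R₀ (ε n • x)‖
        ≤ (∫ x, g (ε n • x) * u n x ^ 2)⁻¹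
          * ∫ x, (g (ε n • x) * u n x ^ 2) * ‖chi R₀ (ε n • x)‖ :=
          mul_le_mul_of_nonneg_left hnum (inv_nonneg.mpr hDpos.le)
      _ ≤ d⁻¹ * ∫ x, (g (ε n • x) * u n x ^ 2) * ‖chi R₀ (ε n • x)‖ :=
          mul_le_mul_of_nonneg_right (inv_anti₀ hd0 hD) hSnn
  refine squeeze_zero_norm' hfinal ?_
  simpa using hS.const_mul d⁻¹
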